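/- arXiv:1601.04880 — 2 statements merged into one kernel-verified Lean document; each statement's English description precedes it below -/
import Mathlib

section
/- The quasi-shuffle product is associative: for all words u, v, w over the alphabet A, (u ∗ v) ∗ w = u ∗ (v ∗ w). -/
open Finsupp

/-- Quasi-shuffle product of words over an alphabet `A`, with bracket `br : RA ⊗ RA → RA`
given on letters. -/
noncomputable def qsh {A : Type*} (br : A → A → (A →₀ ℝ)) : List A → List A → (List A →₀ ℝ)
  | [], v => Finsupp.single v 1
  | a :: u, [] => Finsupp.single (a :: u) 1
  | a :: u, b :: v =>
      Finsupp.mapDomain (a :: ·) (qsh br u (b :: v))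
    + Finsupp.mapDomain (b :: ·) (qsh br (a :: u) v)
    + (br a b).sum fun c r => r • Finsupp.mapDomain (c :: ·) (qsh br u v)
  termination_by u v => u.length + v.length

/-- Bilinear extension of the quasi-shuffle product to `R⟨A⟩`. -/
noncomputable def qshP {A : Type*} (br : A → A → (A →₀ ℝ)) (x y : List A →₀ ℝ) :
    List A →₀ ℝ :=
  x.sum fun u r => y.sum fun v s => (r * s) • qsh br u v

/-- The identity endomorphism (recorded by its action on basis words). -/
noncomputable def idE {A : Type*} : List A → (List A →₀ ℝ) := fun w => Finsupp.single w 1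

/-- The unit `ν`: projection onto the empty word. -/
noncomputable def nuE {A : Type*} : List A → (List A →₀ ℝ) := fun w =>
  match w with
  | [] => Finsupp.single ([] : List A) 1
  | _ :: _ => 0

/-- The augmented ideal projector `J = id - ν`. -/
noncomputable def JE {A : Type*} : List A → (List A →₀ ℝ) := fun w =>
  match w with
  | [] => 0
  | _ :: _ => Finsupp.single w 1

/-- Convolution product of endomorphisms: `(F ⋆ G)(w) = Σ_{uv = w} F(u) ∗ G(v)`. -/
noncomputable def conv {A : Type*} (br : A → A → (A →₀ ℝ))
    (F G : List A → (List A →₀ ℝ)) : List A → (List A →₀ ℝ) :=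
  fun w => ∑ k ∈ Finset.range (w.length + 1), qshP br (F (w.take k)) (G (w.drop k))

/-- Convolution powers, with `F^{⋆0} = ν`. -/
noncomputable def convPow {A : Type*} (br : A → A → (A →₀ ℝ))
    (F : List A → (List A →₀ ℝ)) : ℕ → List A → (List A →₀ ℝ)
  | 0 => nuE
  | k + 1 => conv br F (convPow br F k)

/-- The reversal map `|S|` extended linearly to `R⟨A⟩`. -/
noncomputable def revL {A : Type*} : (List A →₀ ℝ) → (List A →₀ ℝ) :=
  Finsupp.mapDomain List.reverse

/-- The sign reversal map `S : a₁⋯aₙ ↦ (-1)ⁿ aₙ⋯a₁`. -/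
noncomputable def SE {A : Type*} : List A → (List A →₀ ℝ) := fun w =>
  ((-1 : ℝ) ^ w.length) • Finsupp.single w.reverse 1

/-- Expectation map on words: `t^{|w|}/|w|!` on words from `{z}*`, zero otherwise. -/
noncomputable def Eword {A : Type*} [DecidableEq A] (z : A) (t : ℝ) (w : List A) : ℝ :=
  if ∀ a ∈ w, a = z then t ^ w.length / (Nat.factorial w.length) else 0

/-- Linear extension of the expectation map to `R⟨A⟩`. -/
noncomputable def Eext {A : Type*} [DecidableEq A] (z : A) (t : ℝ) (x : List A →₀ ℝ) : ℝ :=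
  x.sum fun w r => r * Eword z t w

/-- Endomorphism inner product `⟨F,G⟩ = Σ_{u,v} E(F(u) ∗ G(v)) (u,v)`, restricted to a
finite set `W` of words, with coefficient matrix `V`. -/
noncomputable def innerE {A : Type*} [DecidableEq A] (br : A → A → (A →₀ ℝ)) (z : A) (t : ℝ)
    (V : List A → List A → ℝ) (W : Finset (List A))
    (F G : List A → (List A →₀ ℝ)) : ℝ :=
  ∑ u ∈ W, ∑ v ∈ W, Eext z t (qshP br (F u) (G v)) * V u v

/-- Projection of an element of `R⟨A⟩` onto words satisfying `p`. -/
noncomputable def projP {A : Type*} (p : List A → Prop) (x : List A →₀ ℝ) : List A →₀ ℝ :=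
  haveI := Classical.decPred p
  Finsupp.filter p x

/-- Composition of the grade-`n` (word-length) projection with an endomorphism. -/
noncomputable def projLen {A : Type*} (n : ℕ) (F : List A → (List A →₀ ℝ)) :
    List A → (List A →₀ ℝ) :=
  fun w => projP (fun u => u.length = n) (F w)

/-- Extension of the bracket to a bilinear product on `RA`. -/
noncomputable def brExt {A : Type*} (br : A → A → (A →₀ ℝ)) (x y : A →₀ ℝ) : A →₀ ℝ :=
  x.sum fun a r => y.sum fun b s => (r * s) • br a b

/-- The endomorphism `½(id - S)` (antisymmetric sign reverse). -/
noncomputable def halfMinus {A : Type*} : List A → (List A →₀ ℝ) :=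
  fun w => (2⁻¹ : ℝ) • (idE w - SE w)

/-- The endomorphism `½(id + S)` (symmetric sign reverse). -/
noncomputable def halfPlus {A : Type*} : List A → (List A →₀ ℝ) :=
  fun w => (2⁻¹ : ℝ) • (idE w + SE w)


/-! The recursion defining `qsh` extends bilinearly: writing `αx` for a linear combination `α`
of letters prepended to `x`, `αx ∗ γy = α(x ∗ γy) + γ(αx ∗ y) + [α, γ](x ∗ y)`. Applying it twice shows
that both `(u ∗ v) ∗ w` and `u ∗ (v ∗ w)` satisfy one and the same seven-term recursion in three
nonempty words (for the right bracketing this uses `[[a, b], c] = [a, [b, c]]`), and both reduce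
to a binary product when one word is empty. Such a recursion determines a function of three words,
by induction on the total length. -/

section QuasiShuffle

variable {A : Type*} (br : A → A → (A →₀ ℝ))

theorem qsh_nil_right (u : List A) : qsh br u [] = single u 1 := by
  cases u <;> rw [qsh]

noncomputable def consBilin : (A →₀ ℝ) →ₗ[ℝ] (List A →₀ ℝ) →ₗ[ℝ] (List A →₀ ℝ) :=
  linearCombination ℝ fun a => lmapDomain ℝ ℝ (List.cons a)

noncomputable def brBilin : (A →₀ ℝ) →ₗ[ℝ] (A →₀ ℝ) →ₗ[ℝ] (A →₀ ℝ) :=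
  linearCombination ℝ fun a => linearCombination ℝ (br a)

noncomputable def qshBilin : (List A →₀ ℝ) →ₗ[ℝ] (List A →₀ ℝ) →ₗ[ℝ] (List A →₀ ℝ) :=
  linearCombination ℝ fun u => linearCombination ℝ (qsh br u)

theorem consBilin_single_single (a : A) (u : List A) :
    consBilin (single a 1) (single u 1) = single (a :: u) 1 := by
  simp [consBilin, linearCombination_single, mapDomain_single]

theorem brBilin_single_single (a b : A) : brBilin br (single a 1) (single b 1) = br a b := by
  simp [brBilin, linearCombination_single]

theorem qshBilin_single_single (u v : List A) :
    qshBilin br (single u 1) (single v 1) = qsh br u v := by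
  simp [qshBilin, linearCombination_single]

theorem qshP_eq_qshBilin (x y : List A →₀ ℝ) : qshP br x y = qshBilin br x y := by
  simp [qshP, qshBilin, linearCombination_apply, LinearMap.finsupp_sum_apply, Finsupp.smul_sum,
    mul_smul]

theorem brExt_eq_brBilin (x y : A →₀ ℝ) : brExt br x y = brBilin br x y := by
  simp [brExt, brBilin, linearCombination_apply, LinearMap.finsupp_sum_apply, Finsupp.smul_sum,
    mul_smul]

theorem qsh_cons_cons (a b : A) (u v : List A) :
    qsh br (a :: u) (b :: v) = consBilin (single a 1) (qsh br u (b :: v))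
      + consBilin (single b 1) (qsh br (a :: u) v) + consBilin (br a b) (qsh br u v) := by
  rw [qsh]
  simp [consBilin, linearCombination_apply, LinearMap.finsupp_sum_apply]

theorem qshBilin_nil_left (y : List A →₀ ℝ) : qshBilin br (single [] 1) y = y := by
  suffices h : qshBilin br (single [] 1) = LinearMap.id from LinearMap.congr_fun h y
  ext v
  simp [qshBilin_single_single, qsh]

theorem qshBilin_nil_right (x : List A →₀ ℝ) : qshBilin br x (single [] 1) = x := by
  suffices h : (qshBilin br).flip (single [] 1) = LinearMap.id from LinearMap.congr_fun h x
  ext u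
  simp [qshBilin_single_single, qsh_nil_right]

theorem qshBilin_consBilin_consBilin (α γ : A →₀ ℝ) (x y : List A →₀ ℝ) :
    qshBilin br (consBilin α x) (consBilin γ y)
      = consBilin α (qshBilin br x (consBilin γ y)) + consBilin γ (qshBilin br (consBilin α x) y)
        + consBilin (brBilin br α γ) (qshBilin br x y) := by
  induction α using Finsupp.induction_linear with
  | zero => simp
  | add α₁ α₂ h₁ h₂ => simp only [map_add, LinearMap.add_apply, h₁, h₂]; abel
  | single a r =>
  induction γ using Finsupp.induction_linear with
  | zero => simp
  | add γ₁ γ₂ h₁ h₂ => simp only [map_add, LinearMap.add_apply, h₁, h₂]; abel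
  | single c s =>
  induction x using Finsupp.induction_linear with
  | zero => simp
  | add x₁ x₂ h₁ h₂ => simp only [map_add, LinearMap.add_apply, h₁, h₂]; abel
  | single u t =>
  induction y using Finsupp.induction_linear with
  | zero => simp
  | add y₁ y₂ h₁ h₂ => simp only [map_add, h₁, h₂]; abel
  | single v t' =>
  rw [← smul_single_one a r, ← smul_single_one c s, ← smul_single_one u t, ← smul_single_one v t']
  simp only [map_smul, LinearMap.smul_apply, consBilin_single_single, qshBilin_single_single,
    brBilin_single_single, qsh_cons_cons, smul_add]
  module

structure IsQshTriple (F : List A → List A → List A → (List A →₀ ℝ)) : Prop where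
  nil_left : ∀ v w, F [] v w = qsh br v w
  nil_mid : ∀ u w, F u [] w = qsh br u w
  nil_right : ∀ u v, F u v [] = qsh br u v
  cons_cons_cons : ∀ a b c u v w, F (a :: u) (b :: v) (c :: w) =
    consBilin (single a 1) (F u (b :: v) (c :: w)) + consBilin (single b 1) (F (a :: u) v (c :: w))
      + consBilin (single c 1) (F (a :: u) (b :: v) w) + consBilin (br a b) (F u v (c :: w))
      + consBilin (br a c) (F u (b :: v) w) + consBilin (br b c) (F (a :: u) v w)
      + consBilin (brBilin br (br a b) (single c 1)) (F u v w)

theorem IsQshTriple.eq {F G : List A → List A → List A → (List A →₀ ℝ)}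
    (hF : IsQshTriple br F) (hG : IsQshTriple br G) : ∀ u v w, F u v w = G u v w
  | [], v, w => by rw [hF.nil_left, hG.nil_left]
  | u, [], w => by rw [hF.nil_mid, hG.nil_mid]
  | u, v, [] => by rw [hF.nil_right, hG.nil_right]
  | a :: u, b :: v, c :: w => by
    rw [hF.cons_cons_cons, hG.cons_cons_cons, hF.eq hG u, hF.eq hG (a :: u) v,
      hF.eq hG (a :: u) (b :: v) w, hF.eq hG u v, hF.eq hG u (b :: v) w, hF.eq hG (a :: u) v w,
      hF.eq hG u v w]
termination_by u v w => u.length + v.length + w.length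

theorem isQshTriple_qsh_left :
    IsQshTriple br fun u v w => qshBilin br (qsh br u v) (single w 1) where
  nil_left v w := by rw [qsh, qshBilin_single_single]
  nil_mid u w := by rw [qsh_nil_right, qshBilin_single_single]
  nil_right u v := qshBilin_nil_right br _
  cons_cons_cons a b c u v w := by
    simp only [qsh_cons_cons, ← consBilin_single_single c w, map_add, LinearMap.add_apply,
      qshBilin_consBilin_consBilin, brBilin_single_single]
    abel

theorem isQshTriple_qsh_right
    (hassoc : ∀ a b c : A, brBilin br (br a b) (single c 1) = brBilin br (single a 1) (br b c)) :
    IsQshTriple br fun u v w => qshBilin br (single u 1) (qsh br v w) where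
  nil_left v w := qshBilin_nil_left br _
  nil_mid u w := by rw [qsh, qshBilin_single_single]
  nil_right u v := by rw [qsh_nil_right, qshBilin_single_single]
  cons_cons_cons a b c u v w := by
    simp only [qsh_cons_cons, ← consBilin_single_single a u, map_add,
      qshBilin_consBilin_consBilin, brBilin_single_single, hassoc]
    abel

end QuasiShuffle

theorem qsh_assoc_general {A : Type*} (br : A → A → (A →₀ ℝ))
    (hassoc : ∀ a b c : A, brExt br (br a b) (Finsupp.single c 1)
        = brExt br (Finsupp.single a 1) (br b c))
    (u v w : List A) :
    qshP br (qsh br u v) (Finsupp.single w 1)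
      = qshP br (Finsupp.single u 1) (qsh br v w) := by
  simp only [brExt_eq_brBilin] at hassoc
  simp only [qshP_eq_qshBilin]
  exact (isQshTriple_qsh_left br).eq br (isQshTriple_qsh_right br hassoc) u v w

/-- the quasi-shuffle product is associative (for a commutative associative
bracket). -/
theorem qsh_assoc {A : Type*} (br : A → A → (A →₀ ℝ))
    (hcomm : ∀ a b : A, br a b = br b a)
    (hassoc : ∀ a b c : A, brExt br (br a b) (Finsupp.single c 1)
        = brExt br (Finsupp.single a 1) (br b c))
    (u v w : List A) :
    qshP br (qsh br u v) (Finsupp.single w 1)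
      = qshP br (Finsupp.single u 1) (qsh br v w) :=
  qsh_assoc_general br hassoc u v w
end

section
/- If for some word pair a, b we have that a constant-coefficient combination α·J + β·J^{⋆2} coincides with the sign reversal map S on all words of length two, i.e. (α J + β J^{⋆2})(ab) = (α+β)ab + β ba + β[a,b] equals S(ab) = ba for all letters a, b, then α = -1, β = 1, and the bracket [a,b] = 0 for all letters a, b; hence S cannot be expressed as a convolution power series in J in any quasi-shuffle algebra with non-trivial bracket. -/
open Finsupp

lemma qshP_single {A : Type*} (br : A → A → (A →₀ ℝ)) (u v : List A) :
    qshP br (Finsupp.single u 1) (Finsupp.single v 1) = qsh br u v := by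
  rw [qshP, Finsupp.sum_single_index, Finsupp.sum_single_index] <;> simp

lemma qshP_zero_left {A : Type*} (br : A → A → (A →₀ ℝ)) (y : List A →₀ ℝ) :
    qshP br 0 y = 0 := by simp [qshP]

lemma qshP_zero_right {A : Type*} (br : A → A → (A →₀ ℝ)) (x : List A →₀ ℝ) :
    qshP br x 0 = 0 := by simp [qshP]

lemma conv2 {A : Type*} (br : A → A → (A →₀ ℝ)) (a b : A) :
    convPow br JE 2 [a, b] = Finsupp.single [a, b] 1 + Finsupp.single [b, a] 1
      + (br a b).sum fun c r => r • Finsupp.single [c] 1 := by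
  have h1 : convPow br JE 1 [b] = Finsupp.single [b] 1 := by
    show conv br JE nuE [b] = _
    rw [conv]
    simp [Finset.sum_range_succ, JE, nuE, qshP_zero_left, qshP_single, qsh]
  have h0 : convPow br JE 1 ([] : List A) = 0 := by
    show conv br JE nuE [] = _
    rw [conv]
    simp [JE, qshP_zero_left]
  show conv br JE (convPow br JE 1) [a, b] = _
  rw [conv]
  simp only [List.length_cons, List.length_nil]
  rw [Finset.sum_range_succ, Finset.sum_range_succ, Finset.sum_range_one]
  simp only [List.take, List.drop, h0, h1]
  rw [qshP_zero_right, show (JE ([] : List A) : List A →₀ ℝ) = 0 from rfl, qshP_zero_left]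
  show 0 + qshP br (JE [a]) (Finsupp.single [b] 1) + 0 = _
  rw [show (JE [a] : List A →₀ ℝ) = Finsupp.single [a] 1 from rfl, qshP_single]
  rw [qsh]
  simp [qsh, Finsupp.mapDomain_single]

lemma T_eq_mapDomain {A : Type*} (x : A →₀ ℝ) :
    (x.sum fun c r => r • Finsupp.single [c] (1:ℝ)) = Finsupp.mapDomain (fun c => [c]) x := by
  rw [Finsupp.mapDomain]
  exact Finsupp.sum_congr fun c _ => by rw [Finsupp.smul_single, smul_eq_mul, mul_one]

/-- if `α·J + β·J^{⋆2}` coincides with the sign reversal map `S` on all words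
of length two, then `α = -1`, `β = 1` and the bracket is trivial; hence `S` cannot be a
convolution power series in `J` in any quasi-shuffle algebra with non-trivial bracket. -/
theorem sign_reversal_forces_trivial_bracket {A : Type*} [Nontrivial A]
    (br : A → A → (A →₀ ℝ)) (α β : ℝ)
    (h : ∀ a b : A, α • JE [a, b] + β • convPow br JE 2 [a, b] = SE [a, b]) :
    α = -1 ∧ β = 1 ∧ ∀ a b : A, br a b = 0 := by
  obtain ⟨a, b, hab⟩ := exists_pair_ne A
  have h' : ∀ a b : A, α • Finsupp.single [a,b] (1:ℝ)
      + β • (Finsupp.single [a, b] 1 + Finsupp.single [b, a] 1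
        + Finsupp.mapDomain (fun c => [c]) (br a b)) = Finsupp.single [b,a] 1 := by
    intro a b
    have := h a b
    rw [conv2, T_eq_mapDomain] at this
    simpa [SE, JE] using this
  have e1 := DFunLike.congr_fun (h' a b) [a, b]
  have e2 := DFunLike.congr_fun (h' a b) [b, a]
  simp [Finsupp.single_apply, Finsupp.mapDomain, Finsupp.sum_apply, hab, hab.symm,
    Finsupp.sum] at e1 e2
  -- e1 : α + β * ... = 0, e2 : β = 1 hopefully
  have hβ : β = 1 := by linarith
  have hα : α = -1 := by linarith
  refine ⟨hα, hβ, fun a b => ?_⟩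
  have := h' a b
  rw [hα, hβ] at this
  have hT : Finsupp.mapDomain (fun c : A => [c]) (br a b) = 0 := by
    linear_combination (norm := module) this
  have hinj : Function.Injective (fun c : A => [c]) := fun x y hxy => by
    simpa using hxy
  exact Finsupp.mapDomain_injective hinj (by rw [hT, Finsupp.mapDomain_zero])
end
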